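/- Sorting a permutation by single-element block moves is equivalent to successively extending a longest increasing subsequence: if π is not the identity and S is a longest increasing subsequence of π, then there exists a monotone single-element block move σ with lis(σπ) = lis(π) + 1. -/

import Mathlib

/-- The identity permutation of `{1,…,n}` as a list `[1, 2, …, n]`. -/
def idL (n : ℕ) : List ℕ := (List.range n).map (· + 1)

/-- `l` is a permutation of `{1,…,n}` (written as a list). -/
def IsPermList (n : ℕ) (l : List ℕ) : Prop := l.Perm (idL n)

/-- The extension of `π` by `π₀ = 0` and `π_{n+1} = n+1`. -/
def ext (n : ℕ) (l : List ℕ) : List ℕ := 0 :: (l ++ [n + 1])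

/-- Number of adjacent pairs of the extended permutation satisfying `p`. -/
def adjCount (p : ℕ → ℕ → Bool) (n : ℕ) (l : List ℕ) : ℕ :=
  ((ext n l).zip (ext n l).tail).countP (fun q => p q.1 q.2)

/-- Number of breakpoints: adjacent pairs with `π_{i+1} ≠ π_i + 1`. -/
def bp (n : ℕ) (l : List ℕ) : ℕ := adjCount (fun a b => b ≠ a + 1) n l

/-- Number of descents: adjacent pairs with `π_i > π_{i+1}`. -/
def des (n : ℕ) (l : List ℕ) : ℕ := adjCount (fun a b => b < a) n l

/-- Number of gaps: adjacent pairs with `π_{i+1} > π_i + 1`. -/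
def gap (n : ℕ) (l : List ℕ) : ℕ := adjCount (fun a b => a + 1 < b) n l

/-- Number of inverse descents: pairs of positions `i < j` with `π_i = π_j + 1`. -/
def invDes (l : List ℕ) : ℕ :=
  (Finset.univ.filter (fun p : Fin l.length × Fin l.length =>
    (p.1 : ℕ) < (p.2 : ℕ) ∧ l.get p.1 = l.get p.2 + 1)).card

/-- Number of inverse gaps: pairs of positions with `i > j + 1` and `π_i = π_j + 1`. -/
def invGap (l : List ℕ) : ℕ :=
  (Finset.univ.filter (fun p : Fin l.length × Fin l.length =>
    (p.2 : ℕ) + 1 < (p.1 : ℕ) ∧ l.get p.1 = l.get p.2 + 1)).card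

/-- `l'` is obtained from `l` by a block move: exchanging two nonempty
consecutive blocks `B` and `C`. -/
def IsBlockMove (l l' : List ℕ) : Prop :=
  ∃ A B C D : List ℕ, B ≠ [] ∧ C ≠ [] ∧ l = A ++ B ++ C ++ D ∧ l' = A ++ C ++ B ++ D

/-- A monotone block move: every element of the first (left) exchanged block
exceeds every element of the second (right) exchanged block. -/
def IsMonotoneBlockMove (l l' : List ℕ) : Prop :=
  ∃ A B C D : List ℕ, B ≠ [] ∧ C ≠ [] ∧ (∀ x ∈ B, ∀ y ∈ C, y < x) ∧
    l = A ++ B ++ C ++ D ∧ l' = A ++ C ++ B ++ D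

/-- A single-element block move: one of the two exchanged blocks has size one. -/
def IsSingleBlockMove (l l' : List ℕ) : Prop :=
  ∃ A B C D : List ℕ, B ≠ [] ∧ C ≠ [] ∧ (B.length = 1 ∨ C.length = 1) ∧
    l = A ++ B ++ C ++ D ∧ l' = A ++ C ++ B ++ D

/-- A monotone single-element block move. -/
def IsMonoSingleBlockMove (l l' : List ℕ) : Prop :=
  ∃ A B C D : List ℕ, B ≠ [] ∧ C ≠ [] ∧ (B.length = 1 ∨ C.length = 1) ∧
    (∀ x ∈ B, ∀ y ∈ C, y < x) ∧ l = A ++ B ++ C ++ D ∧ l' = A ++ C ++ B ++ D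

/-- `l` can be transformed into `target` by `t` moves of type `R`. -/
def SortsIn (R : List ℕ → List ℕ → Prop) (l target : List ℕ) (t : ℕ) : Prop :=
  ∃ c : ℕ → List ℕ, c 0 = l ∧ c t = target ∧ ∀ i < t, R (c i) (c (i + 1))

/-- Length of the longest increasing subsequence of `l`. -/
def lis (l : List ℕ) : ℕ :=
  ((l.sublists.filter (fun s => decide (List.IsChain (· < ·) s))).map List.length).foldr max 0

section LisHelpers


lemma mem_le_foldr_max {L : List ℕ} {a : ℕ} (h : a ∈ L) : a ≤ L.foldr max 0 := by
  induction L with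
  | nil => simp at h
  | cons b L ih =>
    rcases List.mem_cons.mp h with rfl | h
    · exact le_max_left _ _
    · exact le_trans (ih h) (le_max_right _ _)

lemma foldr_max_mem (L : List ℕ) : L.foldr max 0 = 0 ∨ L.foldr max 0 ∈ L := by
  induction L with
  | nil => left; rfl
  | cons b L ih =>
    simp only [List.foldr_cons]
    rcases ih with h | h
    · rw [h]; rcases Nat.eq_zero_or_pos b with rfl | hb
      · left; simp
      · right; rw [Nat.max_eq_left (Nat.zero_le b)]; exact List.mem_cons_self
    · rcases le_total b (L.foldr max 0) with hb | hb
      · right; right; rwa [max_eq_right hb]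
      · right; rw [max_eq_left hb]; exact List.mem_cons_self

lemma le_lis {l s : List ℕ} (hs : s.Sublist l) (hc : s.Pairwise (· < ·)) : s.length ≤ lis l := by
  apply mem_le_foldr_max
  simp only [List.mem_map, List.mem_filter, List.mem_sublists]
  exact ⟨s, ⟨hs, by simpa [List.isChain_iff_pairwise] using hc⟩, rfl⟩

lemma exists_lis (l : List ℕ) : ∃ s : List ℕ, s.Sublist l ∧ s.Pairwise (· < ·) ∧ s.length = lis l := by
  rcases foldr_max_mem ((l.sublists.filter (fun s => decide (List.IsChain (· < ·) s))).map List.length) with h | h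
  · exact ⟨[], List.nil_sublist l, List.Pairwise.nil, by simp [lis, h]⟩
  · simp only [List.mem_map, List.mem_filter, List.mem_sublists] at h
    obtain ⟨s, ⟨hs, hc⟩, hlen⟩ := h
    exact ⟨s, hs, by simpa [List.isChain_iff_pairwise] using hc, hlen⟩

-- index lemmas
lemma idx_lt_of_mem_take {l : List ℕ} {x m} (h : x ∈ l.take m) : l.idxOf x < m := by
  induction l generalizing m with
  | nil => simp at h
  | cons a l ih =>
    cases m with
    | zero => simp at h
    | succ m =>
      simp only [List.take_succ_cons, List.mem_cons] at h
      rcases h with rfl | h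
      · simp [List.idxOf_cons_self]
      · by_cases hxa : x = a
        · subst hxa; simp [List.idxOf_cons_self]
        · rw [List.idxOf_cons_ne _ (fun h' => hxa h'.symm)]
          exact Nat.succ_lt_succ (ih h)

lemma mem_take_of_idx {l : List ℕ} {x m} (hx : x ∈ l) (h : l.idxOf x < m) : x ∈ l.take m := by
  have hlt : l.idxOf x < l.length := List.idxOf_lt_length_iff.mpr hx
  have : (l.take m).get ⟨l.idxOf x, by simp [List.length_take]; omega⟩ = x := by
    simpa [List.get_eq_getElem, List.getElem_take] using List.idxOf_get hlt
  rw [← this]; exact List.get_mem _ _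

lemma idx_ge_of_mem_drop {l : List ℕ} (hl : l.Nodup) {x m} (h : x ∈ l.drop m) : m ≤ l.idxOf x := by
  by_contra hc
  push_neg at hc
  have hx : x ∈ l := List.mem_of_mem_drop h
  have h1 : x ∈ l.take m := mem_take_of_idx hx hc
  have hnd : (l.take m ++ l.drop m).Nodup := by rw [List.take_append_drop]; exact hl
  exact (List.nodup_append'.mp hnd).2.2 h1 h

lemma mem_drop_of_idx {l : List ℕ} {x m} (hx : x ∈ l) (h : m ≤ l.idxOf x) : x ∈ l.drop m := by
  have hx2 : x ∈ l.take m ++ l.drop m := by rw [List.take_append_drop]; exact hx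
  rcases List.mem_append.mp hx2 with h1 | h1
  · exact absurd (idx_lt_of_mem_take h1) (by omega)
  · exact h1

lemma idx_inj {l : List ℕ} {x y} (hx : x ∈ l) (hy : y ∈ l) (h : l.idxOf x = l.idxOf y) : x = y := by
  have hx' := List.idxOf_lt_length_iff.mpr hx
  have hy' := List.idxOf_lt_length_iff.mpr hy
  rw [← List.idxOf_get hx', ← List.idxOf_get hy']
  congr 1
  exact Fin.ext h

-- split lemmas
lemma sublist_take {l t : List ℕ} (hl : l.Nodup) (ht : t.Sublist l) {m : ℕ}
    (h : ∀ x ∈ t, l.idxOf x < m) : t.Sublist (l.take m) := by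
  have := ht
  rw [← List.take_append_drop m l, List.sublist_append_iff] at this
  obtain ⟨u, w, rfl, hu, hw⟩ := this
  have hwnil : w = [] := by
    cases w with
    | nil => rfl
    | cons a w' =>
      exfalso
      have ha : a ∈ l.drop m := hw.subset (List.mem_cons_self)
      have := h a (List.mem_append.mpr (Or.inr (List.mem_cons_self)))
      exact absurd (idx_ge_of_mem_drop hl ha) (by omega)
  subst hwnil; simpa using hu

lemma sublist_drop {l t : List ℕ} (hl : l.Nodup) (ht : t.Sublist l) {m : ℕ}
    (h : ∀ x ∈ t, m ≤ l.idxOf x) : t.Sublist (l.drop m) := by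
  have := ht
  rw [← List.take_append_drop m l, List.sublist_append_iff] at this
  obtain ⟨u, w, rfl, hu, hw⟩ := this
  have hunil : u = [] := by
    cases u with
    | nil => rfl
    | cons a u' =>
      exfalso
      have ha : a ∈ l.take m := hu.subset (List.mem_cons_self)
      have := h a (List.mem_append.mpr (Or.inl (List.mem_cons_self)))
      exact absurd (idx_lt_of_mem_take ha) (by omega)
  subst hunil; simpa using hw

-- erase lemma
lemma sublist_erase_mid {t B D : List ℕ} {c : ℕ} (ht : t.Sublist (B ++ c :: D)) (hc : c ∉ t) :
    t.Sublist (B ++ D) := by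
  rw [List.sublist_append_iff] at ht
  obtain ⟨u, w, rfl, hu, hw⟩ := ht
  cases hw with
  | cons _ hw' => exact hu.append hw'
  | cons_cons _ hw' => exact absurd (List.mem_append.mpr (Or.inr (List.mem_cons_self))) hc

-- decomposition
lemma decomp {l : List ℕ} {x : ℕ} (h : x ∈ l) :
    l = l.take (l.idxOf x) ++ x :: l.drop (l.idxOf x + 1) := by
  have hlt := List.idxOf_lt_length_iff.mpr h
  conv_lhs => rw [← List.take_append_drop (l.idxOf x) l]
  rw [List.drop_eq_getElem_cons hlt]
  congr 2
  have := List.idxOf_get hlt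
  simpa [List.get_eq_getElem] using this

-- pairwise insert
lemma pairwise_insert {s : List ℕ} {c : ℕ} (hsp : s.Pairwise (· < ·)) :
    (s.filter (fun x => decide (x < c)) ++ c :: s.filter (fun x => decide (c < x))).Pairwise (· < ·) := by
  rw [List.pairwise_append]
  refine ⟨hsp.filter _, ?_, ?_⟩
  · rw [List.pairwise_cons]
    exact ⟨fun y hy => by simpa using (List.mem_filter.mp hy).2, hsp.filter _⟩
  · intro x hx y hy
    have hx' : x < c := by simpa using (List.mem_filter.mp hx).2
    rcases List.mem_cons.mp hy with rfl | hy'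
    · exact hx'
    · have hy2 : c < y := by simpa using (List.mem_filter.mp hy').2
      omega

lemma insert_length {s : List ℕ} {c : ℕ} (h : c ∉ s) :
    (s.filter (fun x => decide (x < c))).length + (s.filter (fun x => decide (c < x))).length
      = s.length := by
  have hp := (List.filter_append_perm (fun x => decide (x < c)) s).length_eq
  rw [List.length_append] at hp
  rw [← hp]
  congr 2
  apply List.filter_congr
  intro x hx
  have hxc : x ≠ c := fun h' => h (h' ▸ hx)
  rcases Nat.lt_trichotomy x c with h1 | h1 | h1 <;> simp [h1, Nat.not_lt_of_lt, hxc] <;> omega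

lemma lis_move_le {P Q l : List ℕ} {c : ℕ} (h : (P ++ Q).Sublist l) :
    lis (P ++ c :: Q) ≤ lis l + 1 := by
  obtain ⟨t, htsub, htp, htlen⟩ := exists_lis (P ++ c :: Q)
  rw [← htlen]
  rw [List.sublist_append_iff] at htsub
  obtain ⟨u, w, rfl, hu, hw⟩ := htsub
  cases hw with
  | cons _ hw' =>
    have h1 : (u ++ w).Sublist l := (hu.append hw').trans h
    exact le_trans (le_lis h1 htp) (by omega)
  | @cons_cons w' _ _ hw' =>
    have h1 : (u ++ w').Sublist l := (hu.append hw').trans h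
    have h2 : (u ++ w').Pairwise (· < ·) :=
      htp.sublist ((List.append_sublist_append_left u).mpr (List.sublist_cons_self c w'))
    have := le_lis h1 h2
    simp only [List.length_append, List.length_cons] at this ⊢
    omega

-- key assembly
lemma key_assemble {l l' P Q s : List ℕ} {c : ℕ}
    (hsp : s.Pairwise (· < ·)) (hslen : s.length = lis l) (hcs : c ∉ s)
    (hform : l' = P ++ c :: Q) (hPQ : (P ++ Q).Sublist l)
    (ht1 : (s.filter (fun x => decide (x < c))).Sublist P)
    (ht2 : (s.filter (fun x => decide (c < x))).Sublist Q) :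
    lis l' = lis l + 1 := by
  subst hform
  have hub := lis_move_le (l := l) (c := c) hPQ
  have hlb : lis l + 1 ≤ lis (P ++ c :: Q) := by
    have hsub : (s.filter (fun x => decide (x < c)) ++ c :: s.filter (fun x => decide (c < x))).Sublist
        (P ++ c :: Q) := ht1.append (ht2.cons₂ c)
    have := le_lis hsub (pairwise_insert hsp)
    have hlen := insert_length (s := s) (c := c) hcs
    simp only [List.length_append, List.length_cons] at this
    omega
  omega

lemma pairwise_idxOf {l : List ℕ} (hl : l.Nodup) :
    l.Pairwise (fun u v => l.idxOf u < l.idxOf v) := by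
  induction l with
  | nil => exact List.Pairwise.nil
  | cons a l ih =>
    have hna : a ∉ l := (List.nodup_cons.mp hl).1
    have hnd : l.Nodup := (List.nodup_cons.mp hl).2
    rw [List.pairwise_cons]
    constructor
    · intro b hb
      have hba : b ≠ a := fun h => hna (h ▸ hb)
      rw [List.idxOf_cons_self, List.idxOf_cons_ne _ hba.symm]
      omega
    · apply (ih hnd).imp_of_mem
      intro u v hu hv huv
      have h1 : u ≠ a := fun h => hna (h ▸ hu)
      have h2 : v ≠ a := fun h => hna (h ▸ hv)
      rw [List.idxOf_cons_ne _ h1.symm, List.idxOf_cons_ne _ h2.symm]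
      omega

lemma posmono {l s : List ℕ} (hl : l.Nodup) (hs : s.Sublist l) (hsp : s.Pairwise (· < ·)) :
    ∀ u ∈ s, ∀ v ∈ s, u < v → l.idxOf u < l.idxOf v := by
  have hpi : s.Pairwise (fun u v => u < v ∧ l.idxOf u < l.idxOf v) :=
    hsp.and ((pairwise_idxOf hl).sublist hs)
  have hsym : s.Pairwise (fun u v =>
      (u < v → l.idxOf u < l.idxOf v) ∧ (v < u → l.idxOf v < l.idxOf u)) :=
    hpi.imp (fun h => ⟨fun _ => h.2, fun h' => absurd h' (by omega)⟩)
  intro u hu v hv huv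
  have hR : Symmetric (fun u v : ℕ =>
      (u < v → l.idxOf u < l.idxOf v) ∧ (v < u → l.idxOf v < l.idxOf u)) :=
    fun x y h => ⟨h.2, h.1⟩
  haveI : Std.Symm (fun u v : ℕ =>
      (u < v → l.idxOf u < l.idxOf v) ∧ (v < u → l.idxOf v < l.idxOf u)) := ⟨fun _ _ h => hR h⟩
  exact (hsym.forall hu hv (by omega)).1 huv

lemma posmono_le {l s : List ℕ} (hl : l.Nodup) (hs : s.Sublist l) (hsp : s.Pairwise (· < ·)) :
    ∀ u ∈ s, ∀ v ∈ s, u ≤ v → l.idxOf u ≤ l.idxOf v := by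
  intro u hu v hv huv
  rcases Nat.eq_or_lt_of_le huv with rfl | h
  · exact le_refl _
  · exact le_of_lt (posmono hl hs hsp u hu v hv h)


lemma idL_pairwise (n : ℕ) : (idL n).Pairwise (· < ·) :=
  (List.pairwise_lt_range (n := n)).map _ (fun _ _ h => by omega)

lemma idL_nodup (n : ℕ) : (idL n).Nodup := (idL_pairwise n).imp (fun h => by omega)

lemma mem_idL {n x : ℕ} : x ∈ idL n ↔ 1 ≤ x ∧ x ≤ n := by
  simp only [idL, List.mem_map, List.mem_range]
  constructor
  · rintro ⟨a, ha, rfl⟩; omega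
  · rintro ⟨h1, h2⟩; exact ⟨x - 1, by omega, by omega⟩

lemma idL_length (n : ℕ) : (idL n).length = n := by simp [idL]

instance : IsAntisymm ℕ (· < ·) := ⟨fun _ _ h h' => absurd (lt_trans h h') (lt_irrefl _)⟩

lemma eq_idL_of_sorted {n : ℕ} {l : List ℕ} (hl : l.Perm (idL n))
    (h : l.Pairwise (· < ·)) : l = idL n :=
  List.Perm.eq_of_pairwise (fun _ _ _ _ h1 h2 => absurd (lt_trans h1 h2) (lt_irrefl _)) h (idL_pairwise n) hl

theorem main_thm (n : ℕ) (l : List ℕ) (hl : l.Perm (idL n)) (hne : l ≠ idL n) :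
    ∃ l' : List ℕ, (∃ A B C D : List ℕ, B ≠ [] ∧ C ≠ [] ∧ (B.length = 1 ∨ C.length = 1) ∧
      (∀ x ∈ B, ∀ y ∈ C, y < x) ∧ l = A ++ B ++ C ++ D ∧ l' = A ++ C ++ B ++ D) ∧
    lis l' = lis l + 1 := by
  classical
  have hperm : l.Perm (idL n) := hl
  have hlnd : l.Nodup := hperm.nodup_iff.mpr (idL_nodup n)
  have hlen : l.length = n := by rw [hperm.length_eq, idL_length]
  have hmem : ∀ x, x ∈ l ↔ 1 ≤ x ∧ x ≤ n := fun x => by rw [hperm.mem_iff, mem_idL]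
  have hn1 : 1 ≤ n := by
    by_contra h
    have hn0 : n = 0 := by omega
    subst hn0
    have hl0 : l = [] := List.length_eq_zero_iff.mp hlen
    exact hne (by simp [hl0, idL])
  obtain ⟨s, hssub, hsp, hslen⟩ := exists_lis l
  have hsl : ∀ x ∈ s, x ∈ l := fun x hx => hssub.subset hx
  by_cases hns : n ∈ s
  · by_cases h1s : (1:ℕ) ∈ s
    · -- MAIN CASE: 1 ∈ s and n ∈ s
      have hmiss : ∃ y, y ∈ l ∧ y ∉ s := by
        by_contra h
        push_neg at h
        have hsub2 : l ⊆ s := fun x hx => h x hx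
        have hle := (hlnd.subperm hsub2).length_le
        have hsl2 := hssub.length_le
        have heq : s = l := hssub.eq_of_length (by omega)
        exact hne (eq_idL_of_sorted hperm (heq ▸ hsp))
      have hrunA : ∀ y, y ∈ l → y ∉ s → ∃ a, 2 ≤ a ∧ a ≤ y ∧ (a - 1) ∈ s ∧
          (∀ cc, a ≤ cc → cc ≤ y → cc ∉ s) ∧
          (∀ a', (∀ cc, a' ≤ cc → cc ≤ y → cc ∉ s) → a ≤ a') := by
        intro y hyl hys
        set S := {a : ℕ | ∀ cc, a ≤ cc → cc ≤ y → cc ∉ s} with hS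
        have hyS : y ∈ S := fun cc h1 h2 => by
          have h3 : cc = y := le_antisymm h2 h1
          exact h3 ▸ hys
        have hmem' : sInf S ∈ S := Nat.sInf_mem ⟨y, hyS⟩
        have hle' : sInf S ≤ y := Nat.sInf_le hyS
        have h1y : 1 ≤ y := ((hmem y).mp hyl).1
        have h2A : 2 ≤ sInf S := by
          by_contra h
          push_neg at h
          exact (hmem' 1 (by omega) h1y) h1s
        refine ⟨sInf S, h2A, hle', ?_, hmem', fun a' ha' => Nat.sInf_le ha'⟩
        by_contra h
        have hmem2 : (sInf S - 1) ∈ S := by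
          intro cc h1 h2
          rcases Nat.eq_or_lt_of_le h1 with h3 | h3
          · exact h3 ▸ h
          · exact hmem' cc (by omega) h2
        have := Nat.sInf_le hmem2
        omega
      have hrunB : ∀ y, y ∈ l → y ∉ s → ∃ b, y ≤ b ∧ (b + 1) ∈ s ∧
          (∀ cc, y ≤ cc → cc ≤ b → cc ∉ s) := by
        intro y hyl hys
        set S := {b : ℕ | y ≤ b ∧ b + 1 ∈ s} with hS
        have hyn : y ≤ n := ((hmem y).mp hyl).2
        have hynn : y ≠ n := fun h => hys (h ▸ hns)
        have hN : (n - 1) ∈ S := ⟨by omega, by rw [Nat.sub_add_cancel hn1]; exact hns⟩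
        have hmem' : sInf S ∈ S := Nat.sInf_mem ⟨_, hN⟩
        refine ⟨sInf S, hmem'.1, hmem'.2, ?_⟩
        intro cc h1 h2 hccs
        rcases Nat.eq_or_lt_of_le h1 with h3 | h3
        · exact hys (h3.symm ▸ hccs)
        · have hmem2 : (cc - 1) ∈ S := ⟨by omega, by rw [Nat.sub_add_cancel (by omega)]; exact hccs⟩
          have := Nat.sInf_le hmem2
          omega
      choose AA hA2 hAy hA1s hArun hAmin using hrunA
      choose BB hBy hB1s hBrun using hrunB
      have hAmono : ∀ x y (hxl : x ∈ l) (hxs : x ∉ s) (hyl : y ∈ l) (hys : y ∉ s),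
          x < y → AA x hxl hxs ≤ AA y hyl hys := by
        intro x y hxl hxs hyl hys hxy
        rcases le_or_gt (AA y hyl hys) x with h | h
        · exact hAmin x hxl hxs _ (fun cc h1 h2 => hArun y hyl hys cc h1 (by omega))
        · have := hAy x hxl hxs
          omega
      have hlow : ∀ y (hyl : y ∈ l) (hys : y ∉ s), ∀ x ∈ s, x < y →
          x ≤ AA y hyl hys - 1 ∧ l.idxOf x ≤ l.idxOf (AA y hyl hys - 1) := by
        intro y hyl hys x hxs hxy
        have hxA : x ≤ AA y hyl hys - 1 := by
          by_contra h
          push_neg at h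
          exact hArun y hyl hys x (by omega) (by omega) hxs
        exact ⟨hxA, posmono_le hlnd hssub hsp x hxs _ (hA1s y hyl hys) hxA⟩
      have hhigh : ∀ y (hyl : y ∈ l) (hys : y ∉ s), ∀ x ∈ s, y < x →
          BB y hyl hys + 1 ≤ x ∧ l.idxOf (BB y hyl hys + 1) ≤ l.idxOf x := by
        intro y hyl hys x hxs hxy
        have hxB : BB y hyl hys + 1 ≤ x := by
          by_contra h
          push_neg at h
          exact hBrun y hyl hys x (by omega) (by omega) hxs
        exact ⟨hxB, posmono_le hlnd hssub hsp _ (hB1s y hyl hys) x hxs hxB⟩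
      have hqr : ∀ y (hyl : y ∈ l) (hys : y ∉ s),
          l.idxOf (AA y hyl hys - 1) < l.idxOf (BB y hyl hys + 1) := by
        intro y hyl hys
        have h1 := hA2 y hyl hys
        have h2 := hAy y hyl hys
        have h3 := hBy y hyl hys
        exact posmono hlnd hssub hsp _ (hA1s y hyl hys) _ (hB1s y hyl hys) (by omega)
      have noMid : ∀ c (hcl : c ∈ l) (hcs : c ∉ s),
          (∀ x ∈ s, x < c → l.idxOf x < l.idxOf c) →
          (∀ x ∈ s, c < x → l.idxOf c < l.idxOf x) → False := by
        intro c hcl hcs hL hRR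
        have hdec := decomp hcl
        have ht1 : (s.filter (fun x => decide (x < c))).Sublist (l.take (l.idxOf c)) := by
          apply sublist_take hlnd (List.filter_sublist.trans hssub)
          intro x hx
          have h1 := List.mem_filter.mp hx
          exact hL x h1.1 (by simpa using h1.2)
        have ht2 : (s.filter (fun x => decide (c < x))).Sublist (l.drop (l.idxOf c + 1)) := by
          apply sublist_drop hlnd (List.filter_sublist.trans hssub)
          intro x hx
          have h1 := List.mem_filter.mp hx
          have h2 := hRR x h1.1 (by simpa using h1.2)
          omega
        have hsub : (s.filter (fun x => decide (x < c)) ++ c ::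
            s.filter (fun x => decide (c < x))).Sublist l := by
          conv_rhs => rw [hdec]
          exact ht1.append (ht2.cons₂ c)
        have hlel := le_lis hsub (pairwise_insert hsp)
        have hlen2 := insert_length (s := s) (c := c) hcs
        simp only [List.length_append, List.length_cons] at hlel
        omega
      have hdich : ∀ y (hyl : y ∈ l) (hys : y ∉ s),
          l.idxOf y < l.idxOf (AA y hyl hys - 1) ∨
          l.idxOf (BB y hyl hys + 1) < l.idxOf y := by
        intro y hyl hys
        by_contra h
        push_neg at h
        obtain ⟨hq, hr⟩ := h
        have hA1l : (AA y hyl hys - 1) ∈ l := hsl _ (hA1s y hyl hys)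
        have hB1l : (BB y hyl hys + 1) ∈ l := hsl _ (hB1s y hyl hys)
        have hne1 : y ≠ AA y hyl hys - 1 := fun h' => hys (h' ▸ hA1s y hyl hys)
        have hne2 : y ≠ BB y hyl hys + 1 := fun h' => hys (h' ▸ hB1s y hyl hys)
        have hq' : l.idxOf (AA y hyl hys - 1) < l.idxOf y :=
          lt_of_le_of_ne hq (fun h' => hne1 (idx_inj hA1l hyl h').symm)
        have hr' : l.idxOf y < l.idxOf (BB y hyl hys + 1) :=
          lt_of_le_of_ne hr (fun h' => hne2 (idx_inj hyl hB1l h'))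
        exact noMid y hyl hys
          (fun x hxs hxy => lt_of_le_of_lt (hlow y hyl hys x hxs hxy).2 hq')
          (fun x hxs hxy => lt_of_lt_of_le hr' (hhigh y hyl hys x hxs hxy).2)
      by_cases hRne : {i : ℕ | ∃ y, ∃ (hyl : y ∈ l) (hys : y ∉ s),
          l.idxOf (BB y hyl hys + 1) < l.idxOf y ∧ l.idxOf y = i}.Nonempty
      · -- R case : some missing element lies after its upper anchor; move leftward
        obtain ⟨c, hcl, hcs, hlate, hidx⟩ := Nat.sInf_mem hRne
        have hmin : ∀ y (hyl : y ∈ l) (hys : y ∉ s),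
            l.idxOf (BB y hyl hys + 1) < l.idxOf y → l.idxOf c ≤ l.idxOf y := by
          intro y h1 h2 h3
          rw [hidx]
          exact Nat.sInf_le ⟨y, h1, h2, h3, rfl⟩
        have hA1s' := hA1s c hcl hcs
        have hB1s' := hB1s c hcl hcs
        have hA1l : (AA c hcl hcs - 1) ∈ l := hsl _ hA1s'
        have hB1l : (BB c hcl hcs + 1) ∈ l := hsl _ hB1s'
        set q := l.idxOf (AA c hcl hcs - 1) with hqdef
        set r := l.idxOf (BB c hcl hcs + 1) with hrdef
        set pc := l.idxOf c with hpcdef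
        have hqr' : q < r := hqr c hcl hcs
        have hrpc : r < pc := hlate
        have hpclen : pc < l.length := List.idxOf_lt_length_iff.mpr hcl
        set A := l.take (q+1) with hAdef
        set B := (l.take pc).drop (q+1) with hBdef
        set D := l.drop (pc+1) with hDdef
        have hABdef : A ++ B = l.take pc := by
          rw [hAdef, hBdef]
          conv_rhs => rw [← List.take_append_drop (q+1) (l.take pc)]
          congr 1
          rw [List.take_take]
          congr 1
          omega
        have hdecl : l = A ++ B ++ c :: D := by
          rw [hABdef, hDdef, hpcdef]
          exact decomp hcl
        have hAlen : A.length = q + 1 := by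
          rw [hAdef, List.length_take]
          omega
        have hBsub1 : B.Sublist (l.take pc) := List.drop_sublist _ _
        have hBsub2 : B.Sublist (l.drop (q+1)) := by
          rw [hBdef, List.drop_take]
          exact List.take_sublist _ _
        have hBmem : ∀ x ∈ B, x ∈ l ∧ q + 1 ≤ l.idxOf x ∧ l.idxOf x < pc := by
          intro x hx
          have h1 : x ∈ l.take pc := hBsub1.subset hx
          have h2 : x ∈ l.drop (q+1) := hBsub2.subset hx
          exact ⟨(List.take_sublist _ _).subset h1, idx_ge_of_mem_drop hlnd h2,
            idx_lt_of_mem_take h1⟩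
        have hBlen : B.length = pc - (q+1) := by
          rw [hBdef, List.length_drop, List.length_take]
          omega
        have hBne : B ≠ [] := by
          intro h
          rw [h] at hBlen
          simp at hBlen
          omega
        have hmono : ∀ x ∈ B, c < x := by
          intro x hx
          obtain ⟨hxl, hxge, hxlt⟩ := hBmem x hx
          rcases Nat.lt_trichotomy x c with h | h | h
          · exfalso
            by_cases hxs : x ∈ s
            · have h2 := (hlow c hcl hcs x hxs h).2
              rw [← hqdef] at h2
              omega
            · rcases hdich x hxl hxs with hearly' | hlate'
              · have h1 : AA x hxl hxs ≤ AA c hcl hcs := hAmono x c hxl hxs hcl hcs h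
                have h4 := posmono_le hlnd hssub hsp _ (hA1s x hxl hxs) _ hA1s' (by omega)
                rw [← hqdef] at h4
                omega
              · have h5 := hmin x hxl hxs hlate'
                omega
          · exfalso
            rw [h, ← hpcdef] at hxlt
            omega
          · exact h
        refine ⟨A ++ [c] ++ B ++ D,
          ⟨A, B, [c], D, hBne, by simp, Or.inr rfl, ?_, by simpa using hdecl, rfl⟩, ?_⟩
        · intro x hx y hy
          rw [List.mem_singleton] at hy
          rw [hy]
          exact hmono x hx
        · apply key_assemble (P := A) (Q := B ++ D) (c := c) hsp hslen hcs (by simp)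
          · rw [hdecl, List.append_assoc]
            exact (List.append_sublist_append_left A).mpr
              ((List.append_sublist_append_left B).mpr (D.sublist_cons_self c))
          · rw [hAdef]
            apply sublist_take hlnd (List.filter_sublist.trans hssub)
            intro x hx
            have h1 := List.mem_filter.mp hx
            have h2 := (hlow c hcl hcs x h1.1 (by simpa using h1.2)).2
            rw [← hqdef] at h2
            omega
          · have h5 : (s.filter (fun x => decide (c < x))).Sublist (l.drop (q+1)) := by
              apply sublist_drop hlnd (List.filter_sublist.trans hssub)
              intro x hx
              have h1 := List.mem_filter.mp hx
              have h2 := (hhigh c hcl hcs x h1.1 (by simpa using h1.2)).2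
              rw [← hrdef] at h2
              omega
            have h6 : l.drop (q+1) = B ++ c :: D := by
              have h7 : l = A ++ (B ++ c :: D) := by rw [hdecl, List.append_assoc]
              conv_lhs => rw [h7]
              exact List.drop_left' hAlen
            rw [h6] at h5
            exact sublist_erase_mid h5 (fun h => hcs (List.mem_filter.mp h).1)
      · -- L case : every missing element lies before its lower anchor; move rightward
        have hearly : ∀ y (hyl : y ∈ l) (hys : y ∉ s),
            l.idxOf y < l.idxOf (AA y hyl hys - 1) := by
          intro y h1 h2
          rcases hdich y h1 h2 with h | h
          · exact h
          · exact absurd ⟨l.idxOf y, y, h1, h2, h, rfl⟩ hRne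
        obtain ⟨y0, hy0l, hy0s⟩ := hmiss
        have hbdd : BddAbove {i : ℕ | ∃ y, ∃ (_ : y ∈ l) (_ : y ∉ s), l.idxOf y = i} := by
          refine ⟨l.length, ?_⟩
          rintro i ⟨y, hy1, hy2, rfl⟩
          exact le_of_lt (List.idxOf_lt_length_iff.mpr hy1)
        have hne2 : {i : ℕ | ∃ y, ∃ (_ : y ∈ l) (_ : y ∉ s), l.idxOf y = i}.Nonempty :=
          ⟨l.idxOf y0, y0, hy0l, hy0s, rfl⟩
        obtain ⟨c, hcl, hcs, hidx⟩ := Nat.sSup_mem hne2 hbdd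
        have hmax : ∀ y (hyl : y ∈ l) (hys : y ∉ s), l.idxOf y ≤ l.idxOf c := by
          intro y h1 h2
          rw [hidx]
          exact le_csSup hbdd ⟨y, h1, h2, rfl⟩
        have hA1s' := hA1s c hcl hcs
        have hB1s' := hB1s c hcl hcs
        have hA1l : (AA c hcl hcs - 1) ∈ l := hsl _ hA1s'
        set pc := l.idxOf c with hpcdef
        set q := l.idxOf (AA c hcl hcs - 1) with hqdef
        set r := l.idxOf (BB c hcl hcs + 1) with hrdef
        have hpcq : pc < q := hearly c hcl hcs
        have hqr' : q < r := hqr c hcl hcs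
        have hqlen : q < l.length := List.idxOf_lt_length_iff.mpr hA1l
        set A := l.take pc with hAdef
        set C := (l.take (q+1)).drop (pc+1) with hCdef
        set D := l.drop (q+1) with hDdef
        have hCD : C ++ D = l.drop (pc+1) := by
          rw [hCdef, hDdef, List.drop_take]
          have h1 : q + 1 - (pc+1) = q - pc := by omega
          rw [h1]
          have h2 : l.drop (q+1) = (l.drop (pc+1)).drop (q - pc) := by
            rw [List.drop_drop]
            congr 1
            omega
          rw [h2, List.take_append_drop]
        have hdecl : l = A ++ c :: (C ++ D) := by
          rw [hCD, hAdef, hpcdef]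
          exact decomp hcl
        have hClen : C.length = q - pc := by
          rw [hCdef, List.length_drop, List.length_take]
          omega
        have hCne : C ≠ [] := by
          intro h
          rw [h] at hClen
          simp at hClen
          omega
        have hCsub1 : C.Sublist (l.take (q+1)) := List.drop_sublist _ _
        have hCsub2 : C.Sublist (l.drop (pc+1)) := by
          rw [hCdef, List.drop_take]
          exact List.take_sublist _ _
        have hCmem : ∀ y ∈ C, y ∈ l ∧ pc + 1 ≤ l.idxOf y ∧ l.idxOf y < q + 1 := by
          intro y hy
          have h1 : y ∈ l.take (q+1) := hCsub1.subset hy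
          have h2 : y ∈ l.drop (pc+1) := hCsub2.subset hy
          exact ⟨(List.take_sublist _ _).subset h1, idx_ge_of_mem_drop hlnd h2,
            idx_lt_of_mem_take h1⟩
        have hmono : ∀ y ∈ C, y < c := by
          intro y hy
          obtain ⟨hyl, h1, h2⟩ := hCmem y hy
          rcases Nat.lt_trichotomy y c with h | h | h
          · exact h
          · exfalso
            rw [h, ← hpcdef] at h1
            omega
          · exfalso
            by_cases hys : y ∈ s
            · have h3 := (hhigh c hcl hcs y hys h).2
              rw [← hrdef] at h3
              omega
            · have h4 := hmax y hyl hys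
              omega
        have hAClen : (A ++ c :: C).length = q + 1 := by
          simp only [List.length_append, List.length_cons, hClen]
          rw [hAdef, List.length_take]
          omega
        refine ⟨A ++ C ++ [c] ++ D,
          ⟨A, [c], C, D, by simp, hCne, Or.inl rfl, ?_, by simpa using hdecl, rfl⟩, ?_⟩
        · intro x hx y hy
          rw [List.mem_singleton] at hx
          rw [hx]
          exact hmono y hy
        · apply key_assemble (P := A ++ C) (Q := D) (c := c) hsp hslen hcs (by simp)
          · rw [hdecl, List.append_assoc]
            exact (List.append_sublist_append_left A).mpr ((C ++ D).sublist_cons_self c)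
          · have h5 : (s.filter (fun x => decide (x < c))).Sublist (l.take (q+1)) := by
              apply sublist_take hlnd (List.filter_sublist.trans hssub)
              intro x hx
              have h1' := List.mem_filter.mp hx
              have h2' := (hlow c hcl hcs x h1'.1 (by simpa using h1'.2)).2
              rw [← hqdef] at h2'
              omega
            have h6 : l.take (q+1) = A ++ c :: C := by
              have h7 : l = (A ++ c :: C) ++ D := by
                rw [hdecl]
                simp [List.append_assoc]
              conv_lhs => rw [h7]
              exact List.take_left' hAClen
            rw [h6] at h5
            exact sublist_erase_mid h5 (fun h => hcs (List.mem_filter.mp h).1)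
          · rw [hDdef]
            apply sublist_drop hlnd (List.filter_sublist.trans hssub)
            intro x hx
            have h1' := List.mem_filter.mp hx
            have h2' := (hhigh c hcl hcs x h1'.1 (by simpa using h1'.2)).2
            rw [← hrdef] at h2'
            omega
    · -- CASE 1 ∉ s : move 1 to the front
      have h1l : (1:ℕ) ∈ l := (hmem 1).mpr ⟨le_rfl, hn1⟩
      have hdec := decomp h1l
      set B := l.take (l.idxOf 1) with hB
      set D := l.drop (l.idxOf 1 + 1) with hD
      have hsBD : s.Sublist (B ++ D) := sublist_erase_mid (hdec ▸ hssub) h1s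
      have hsgt : ∀ x ∈ s, 1 < x := by
        intro x hx
        have h1 := ((hmem x).mp (hsl x hx)).1
        have h2 : x ≠ 1 := fun h => h1s (h ▸ hx)
        omega
      have hBne : B ≠ [] := by
        intro hBnil
        rw [hBnil] at hdec
        have hsub1 : (1 :: s).Sublist l := by
          rw [hdec]
          simp only [List.nil_append]
          exact (by simpa [hBnil] using hsBD : s.Sublist D).cons₂ 1
        have hpw : (1 :: s).Pairwise (· < ·) := List.pairwise_cons.mpr ⟨hsgt, hsp⟩
        have := le_lis hsub1 hpw
        simp only [List.length_cons] at this
        omega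
      refine ⟨[] ++ [1] ++ B ++ D, ⟨[], B, [1], D, hBne, by simp, Or.inr rfl, ?_, by simpa using hdec, rfl⟩, ?_⟩
      · intro x hx y hy
        rw [List.mem_singleton] at hy
        subst hy
        have hxl : x ∈ l := (List.take_sublist _ _).subset hx
        have h1 := ((hmem x).mp hxl).1
        have hx1 : x ≠ 1 := by
          intro h
          subst h
          exact absurd (idx_lt_of_mem_take hx) (lt_irrefl _)
        omega
      · apply key_assemble (P := ([]:List ℕ)) (Q := B ++ D) (c := 1) hsp hslen h1s (by simp)
        · simp only [List.nil_append]
          rw [hdec]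
          exact (List.append_sublist_append_left B).mpr (D.sublist_cons_self 1)
        · have hf : s.filter (fun x => decide (x < 1)) = [] :=
            List.filter_eq_nil_iff.mpr (fun a ha => by simpa using (by have := hsgt a ha; omega : ¬ a < 1))
          rw [hf]
        · have hf : s.filter (fun x => decide (1 < x)) = s :=
            List.filter_eq_self.mpr (fun a ha => decide_eq_true (hsgt a ha))
          rw [hf]; exact hsBD
  · -- CASE n ∉ s : move n to the end
    have hnl : n ∈ l := (hmem n).mpr ⟨hn1, le_rfl⟩
    have hdec := decomp hnl
    set A := l.take (l.idxOf n) with hA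
    set C := l.drop (l.idxOf n + 1) with hC
    have hsAC : s.Sublist (A ++ C) := sublist_erase_mid (hdec ▸ hssub) hns
    have hslt : ∀ x ∈ s, x < n := by
      intro x hx
      have h1 := ((hmem x).mp (hsl x hx)).2
      have h2 : x ≠ n := fun h => hns (h ▸ hx)
      omega
    have hCne : C ≠ [] := by
      intro hCnil
      rw [hCnil] at hdec
      have hsA : s.Sublist A := by simpa [hCnil] using hsAC
      have hsub1 : (s ++ [n]).Sublist l := by
        rw [hdec]
        exact hsA.append (List.Sublist.refl [n])
      have hpw : (s ++ [n]).Pairwise (· < ·) := by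
        rw [List.pairwise_append]
        exact ⟨hsp, by simp, fun x hx y hy => by rw [List.mem_singleton] at hy; exact hy ▸ hslt x hx⟩
      have := le_lis hsub1 hpw
      simp only [List.length_append, List.length_singleton] at this
      omega
    refine ⟨A ++ C ++ [n] ++ [], ⟨A, [n], C, [], by simp, hCne, Or.inl rfl, ?_, by simpa using hdec, rfl⟩, ?_⟩
    · intro x hx y hy
      rw [List.mem_singleton] at hx
      rw [hx]
      have hyl : y ∈ l := (List.drop_sublist _ _).subset hy
      have h1 := ((hmem y).mp hyl).2
      have hnd2 : (n :: C).Nodup := by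
        have hsub2 : (n :: C).Sublist l := by
          rw [hdec]; exact List.sublist_append_right A (n :: C)
        exact hsub2.nodup hlnd
      have hyn : y ≠ n := fun h => (List.nodup_cons.mp hnd2).1 (h ▸ hy)
      omega
    · apply key_assemble (P := A ++ C) (Q := ([]:List ℕ)) (c := n) hsp hslen hns (by simp)
      · -- hPQ
        rw [List.append_nil, hdec]
        exact (List.append_sublist_append_left A).mpr ((C.sublist_cons_self n))
      · -- ht1
        have : s.filter (fun x => decide (x < n)) = s :=
          List.filter_eq_self.mpr (fun a ha => decide_eq_true (hslt a ha))
        rw [this]; exact hsAC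
      · -- ht2
        have : s.filter (fun x => decide (n < x)) = [] :=
          List.filter_eq_nil_iff.mpr (fun a ha => by simpa using (by have := hslt a ha; omega : ¬ n < a))
        rw [this]

end LisHelpers

/-- If `π` is not the identity, there is a monotone single-element block move
that extends a longest increasing subsequence, i.e., increases `lis` by one. -/
theorem exists_lis_increasing_move (n : ℕ) (l : List ℕ)
    (hl : IsPermList n l) (hne : l ≠ idL n) :
    ∃ l' : List ℕ, IsMonoSingleBlockMove l l' ∧ lis l' = lis l + 1 := by
  obtain ⟨l', hm, he⟩ := main_thm n l hl hne
  exact ⟨l', hm, he⟩
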